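/- Let r ≥ 2 and suppose A is an n×n complex r-partite matrix with all entries of absolute value at most 1 and trace norm equal to n^(3/2)·sqrt(1 − 1/r). Then r divides n, each partition set has size exactly n/r, every entry outside the diagonal blocks has absolute value exactly 1, and A A* = (1 − 1/r)·n·I_n. -/

import Mathlib

open Matrix BigOperators Kronecker

/-- The singular values of a square matrix `A` over an `RCLike` field: the square roots of the
eigenvalues of the Hermitian matrix `A * Aᴴ`. -/
noncomputable def singularValues {𝕜 : Type*} [RCLike 𝕜] {m : Type*} [Fintype m] [DecidableEq m]
    (A : Matrix m m 𝕜) : m → ℝ :=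
  fun i => Real.sqrt ((Matrix.isHermitian_mul_conjTranspose_self A).eigenvalues i)

/-- The trace norm (nuclear norm) of a square matrix: the sum of its singular values. -/
noncomputable def traceNorm {𝕜 : Type*} [RCLike 𝕜] {m : Type*} [Fintype m] [DecidableEq m]
    (A : Matrix m m 𝕜) : ℝ :=
  ∑ i, singularValues A i

private lemma key_identity {ι : Type*} (s : Finset ι) (f : ι → ℝ) :
    ∑ j ∈ s, ((s.card : ℝ) * f j - ∑ i ∈ s, f i) ^ 2
      = (s.card : ℝ) * ((s.card : ℝ) * (∑ i ∈ s, f i ^ 2) - (∑ i ∈ s, f i) ^ 2) := by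
  have h1 : ∑ j ∈ s, ((s.card : ℝ) * f j - ∑ i ∈ s, f i) ^ 2
      = ∑ j ∈ s, ((s.card : ℝ) ^ 2 * f j ^ 2
          - 2 * s.card * (∑ i ∈ s, f i) * f j + (∑ i ∈ s, f i) ^ 2) := by
    refine Finset.sum_congr rfl fun j _ => by ring
  rw [h1, Finset.sum_add_distrib, Finset.sum_sub_distrib, ← Finset.mul_sum, ← Finset.mul_sum,
    Finset.sum_const, nsmul_eq_mul]
  ring

private lemma eq_of_sq_sum_eq {ι : Type*} (s : Finset ι) (f : ι → ℝ)
    (h : (∑ i ∈ s, f i) ^ 2 = (s.card : ℝ) * ∑ i ∈ s, f i ^ 2) :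
    ∀ j ∈ s, (s.card : ℝ) * f j = ∑ i ∈ s, f i := by
  have h0 : ∑ j ∈ s, ((s.card : ℝ) * f j - ∑ i ∈ s, f i) ^ 2 = 0 := by
    rw [key_identity, ← h, sub_self, mul_zero]
  intro j hj
  have := (Finset.sum_eq_zero_iff_of_nonneg (fun i _ => sq_nonneg _)).mp h0 j hj
  have := pow_eq_zero_iff (n := 2) (by norm_num) |>.mp this
  linarith

set_option maxHeartbeats 1000000 in
/-- properties of an `r`-partite matrix with maximal trace norm: `r` divides `n`,
all partition sets have size `n / r`, all entries outside the diagonal blocks have absolute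
value exactly `1`, and `A Aᴴ = (1 - 1/r) n I`. -/
theorem traceNorm_extremal_structure {n r : ℕ} (hr : 2 ≤ r)
    (A : Matrix (Fin n) (Fin n) ℂ)
    (hbd : ∀ i j, ‖A i j‖ ≤ 1)
    (p : Fin n → Fin r)
    (hpart : ∀ i j, p i = p j → A i j = 0)
    (heq : traceNorm A = (n : ℝ) ^ (3 / 2 : ℝ) * Real.sqrt (1 - 1 / r)) :
    r ∣ n ∧
    (∀ a : Fin r, (Finset.univ.filter fun i => p i = a).card = n / r) ∧
    (∀ i j, p i ≠ p j → ‖A i j‖ = 1) ∧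
    A * Aᴴ = (((1 - 1 / r : ℝ) * n : ℝ) : ℂ) • 1 := by
  classical
  rcases Nat.eq_zero_or_pos n with hn0 | hn
  · subst hn0
    refine ⟨dvd_zero r, fun a => by simp, fun i => i.elim0, ?_⟩
    ext i j; exact i.elim0
  -- basic real facts
  have hrpos : 0 < r := lt_of_lt_of_le (by norm_num) hr
  have hR : (2 : ℝ) ≤ (r : ℝ) := by exact_mod_cast hr
  have hR0 : (0 : ℝ) < r := by positivity
  have hN0 : (0 : ℝ) < n := by exact_mod_cast hn
  have hfrac : (0 : ℝ) ≤ 1 - 1 / r := by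
    rw [sub_nonneg, div_le_one hR0]; linarith
  set N : ℝ := (n : ℝ) with hNdef
  set R : ℝ := (r : ℝ) with hRdef
  -- eigenvalues
  set hH := Matrix.isHermitian_mul_conjTranspose_self A with hHdef
  set lam : Fin n → ℝ := hH.eigenvalues with hlamdef
  have hlam0 : ∀ i, 0 ≤ lam i := fun i =>
    Matrix.eigenvalues_self_mul_conjTranspose_nonneg A i
  set S : ℝ := traceNorm A with hSdef
  have hSsum : S = ∑ i, Real.sqrt (lam i) := rfl
  -- T : sum of normSq of entries
  set T : ℝ := ∑ i, ∑ j, Complex.normSq (A i j) with hTdef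
  -- trace identity : ∑ lam = T
  have htrace : ∑ i, lam i = T := by
    have h2 : (A * Aᴴ).trace = ∑ i, (lam i : ℂ) := by
      calc (A * Aᴴ).trace
          = ((hH.eigenvectorUnitary : Matrix (Fin n) (Fin n) ℂ)
              * Matrix.diagonal (RCLike.ofReal ∘ lam)
              * star (hH.eigenvectorUnitary : Matrix (Fin n) (Fin n) ℂ)).trace := by
            conv_lhs => rw [hH.spectral_theorem, Unitary.conjStarAlgAut_apply]
        _ = (star (hH.eigenvectorUnitary : Matrix (Fin n) (Fin n) ℂ)
              * (hH.eigenvectorUnitary : Matrix (Fin n) (Fin n) ℂ)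
              * Matrix.diagonal (RCLike.ofReal ∘ lam)).trace := by
            rw [Matrix.trace_mul_cycle]
        _ = ∑ i, (lam i : ℂ) := by
            rw [Matrix.mem_unitaryGroup_iff'.mp hH.eigenvectorUnitary.2, one_mul,
              Matrix.trace_diagonal]
            rfl
    have h3 : (A * Aᴴ).trace = ((T : ℝ) : ℂ) := by
      rw [hTdef]
      push_cast
      rw [Matrix.trace]
      refine Finset.sum_congr rfl fun i _ => ?_
      rw [Matrix.diag_apply, Matrix.mul_apply]
      refine Finset.sum_congr rfl fun j _ => ?_
      rw [Matrix.conjTranspose_apply, Complex.star_def, Complex.mul_conj]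
    have h4 : ((∑ i, lam i : ℝ) : ℂ) = ((T : ℝ) : ℂ) := by
      push_cast
      exact h2.symm.trans h3
    exact_mod_cast h4
  -- Cauchy-Schwarz on singular values
  have hCS : S ^ 2 ≤ N * T := by
    have := sq_sum_le_card_mul_sum_sq (s := (Finset.univ : Finset (Fin n)))
      (f := fun i => Real.sqrt (lam i))
    rw [← hSsum] at this
    calc S ^ 2 ≤ (Finset.univ.card : ℝ) * ∑ i, Real.sqrt (lam i) ^ 2 := by exact_mod_cast this
      _ = N * T := by
        rw [← htrace]
        congr 1
        · simp [hNdef]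
        · exact Finset.sum_congr rfl fun i _ => Real.sq_sqrt (hlam0 i)
  -- counting bound
  set c : Fin r → ℕ := fun a => (Finset.univ.filter fun i => p i = a).card with hcdef
  set Q : ℝ := ∑ a, (c a : ℝ) ^ 2 with hQdef
  have hcsum : ∑ a, (c a : ℝ) = N := by
    rw [hNdef]
    norm_cast
    have h := Finset.card_eq_sum_card_fiberwise
      (f := p) (s := (Finset.univ : Finset (Fin n))) (t := Finset.univ)
      (fun i _ => Finset.mem_univ (p i))
    simp only [Finset.card_univ, Fintype.card_fin] at h
    exact h.symm
  -- ∑_i c (p i) = Q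
  have hfib : ∑ i : Fin n, (c (p i) : ℝ) = Q := by
    rw [hQdef, ← Finset.sum_fiberwise (g := p) (f := fun i => (c (p i) : ℝ))]
    refine Finset.sum_congr rfl fun a _ => ?_
    have hcong : ∀ i ∈ Finset.univ.filter (fun i => p i = a), (c (p i) : ℝ) = (c a : ℝ) := by
      intro i hi
      rw [Finset.mem_filter] at hi
      rw [hi.2]
    rw [Finset.sum_congr rfl hcong, Finset.sum_const]
    simp [hcdef, sq, nsmul_eq_mul]
  have hTle : T ≤ N ^ 2 - Q := by
    have hstep : T ≤ ∑ i : Fin n, ∑ j : Fin n, (1 - if p j = p i then (1:ℝ) else 0) := by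
      refine Finset.sum_le_sum fun i _ => Finset.sum_le_sum fun j _ => ?_
      by_cases h : p i = p j
      · simp [hpart i j h, h.symm]
      · have : Complex.normSq (A i j) ≤ 1 := by
          rw [← Complex.sq_norm]
          nlinarith [hbd i j, norm_nonneg (A i j)]
        rw [if_neg (show ¬ p j = p i from fun hh => h hh.symm), sub_zero]
        exact this
    have hsum : ∑ i : Fin n, ∑ j : Fin n, (1 - if p j = p i then (1:ℝ) else 0)
        = N ^ 2 - Q := by
      have hinner : ∀ i : Fin n, ∑ j : Fin n, (1 - if p j = p i then (1:ℝ) else 0)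
          = N - c (p i) := by
        intro i
        rw [Finset.sum_sub_distrib, Finset.sum_const, Finset.sum_boole]
        simp [hcdef, hNdef, Finset.filter_congr_decidable]
      rw [Finset.sum_congr rfl fun i _ => hinner i, Finset.sum_sub_distrib, hfib,
        Finset.sum_const]
      simp [hNdef, sq]
    exact hstep.trans hsum.le
  -- size Cauchy-Schwarz
  have hQge : N ^ 2 ≤ R * Q := by
    have := sq_sum_le_card_mul_sum_sq (s := (Finset.univ : Finset (Fin r)))
      (f := fun a => (c a : ℝ))
    rw [hcsum] at this
    simpa [hRdef, hQdef] using this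
  -- squared trace norm
  have hS2 : S ^ 2 = N ^ 3 * (1 - 1 / R) := by
    have h32 : ((n:ℝ) ^ (3/2 : ℝ)) ^ 2 = N ^ 3 := by
      rw [← Real.rpow_natCast ((n:ℝ) ^ (3/2 : ℝ)) 2, ← Real.rpow_mul (Nat.cast_nonneg n),
        hNdef, show ((3:ℝ)/2 * ((2:ℕ):ℝ)) = ((3:ℕ):ℝ) by norm_num, Real.rpow_natCast]
    rw [heq, mul_pow, h32, Real.sq_sqrt hfrac]
  have hS2' : R * S ^ 2 = N ^ 3 * (R - 1) := by
    rw [hS2]; field_simp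
  -- equality chain
  have hQeq : R * Q = N ^ 2 := by
    have f12 : S ^ 2 ≤ N ^ 3 - N * Q := by nlinarith [hCS, hTle, hN0.le]
    have hNQ : N * (R * Q) ≤ N * N ^ 2 := by nlinarith [f12, hS2', hR]
    exact le_antisymm (le_of_mul_le_mul_left hNQ hN0) hQge
  have hS2'' : S ^ 2 = N ^ 3 - N * Q := by
    have h1 : N * (R * Q) = N * N ^ 2 := by rw [hQeq]
    have : R * S ^ 2 = R * (N ^ 3 - N * Q) := by nlinarith [hS2', h1]
    exact mul_left_cancel₀ (ne_of_gt hR0) this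
  have hTeq : T = N ^ 2 - Q := by
    have h1 : N * T ≤ N * (N ^ 2 - Q) := by nlinarith [hTle, hN0.le]
    have h2 : N * (N ^ 2 - Q) ≤ N * T := by nlinarith [hCS, hS2'']
    exact mul_left_cancel₀ (ne_of_gt hN0) (le_antisymm h1 h2)
  have hSeqNT : S ^ 2 = N * T := by nlinarith [hTeq, hS2'']
  -- conclusion 1 & 2 : partition sizes
  have hsizes : ∀ a : Fin r, (r : ℝ) * (c a : ℝ) = N := by
    have hcs2 : (∑ a, (c a : ℝ)) ^ 2
        = ((Finset.univ : Finset (Fin r)).card : ℝ) * ∑ a, (c a : ℝ) ^ 2 := by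
      rw [hcsum]
      simpa [hRdef, hQdef] using hQeq.symm
    intro a
    have := eq_of_sq_sum_eq Finset.univ (fun a => (c a : ℝ)) hcs2 a (Finset.mem_univ a)
    simpa [hcsum] using this
  have hsizesNat : ∀ a : Fin r, r * c a = n := by
    intro a
    have h := hsizes a
    rw [hNdef] at h
    exact_mod_cast h
  obtain ⟨a0⟩ : Nonempty (Fin r) := ⟨⟨0, hrpos⟩⟩
  have hdvd : r ∣ n := ⟨c a0, (hsizesNat a0).symm⟩
  have hcard : ∀ a : Fin r, c a = n / r := fun a => by
    rw [← hsizesNat a, Nat.mul_div_cancel_left _ hrpos]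
  -- conclusion 3 : entries
  have hent : ∀ i j, p i ≠ p j → ‖A i j‖ = 1 := by
    intro i j hij
    -- flatten double sums over product
    have hflat : ∑ x ∈ Finset.univ ×ˢ Finset.univ, Complex.normSq (A x.1 x.2)
        = ∑ x ∈ Finset.univ ×ˢ Finset.univ,
            (1 - if p x.2 = p x.1 then (1:ℝ) else 0) := by
      rw [Finset.sum_product, Finset.sum_product]
      have hsum : ∑ i : Fin n, ∑ j : Fin n, (1 - if p j = p i then (1:ℝ) else 0)
          = N ^ 2 - Q := by
        have hinner : ∀ i : Fin n, ∑ j : Fin n, (1 - if p j = p i then (1:ℝ) else 0)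
            = N - c (p i) := by
          intro i
          rw [Finset.sum_sub_distrib, Finset.sum_const, Finset.sum_boole]
          simp [hcdef, hNdef, Finset.filter_congr_decidable]
        rw [Finset.sum_congr rfl fun i _ => hinner i, Finset.sum_sub_distrib, hfib,
          Finset.sum_const]
        simp [hNdef, sq]
      rw [← hTdef, hTeq, hsum]
    have hptle : ∀ x ∈ Finset.univ ×ˢ Finset.univ (α := Fin n),
        Complex.normSq (A x.1 x.2) ≤ 1 - if p x.2 = p x.1 then (1:ℝ) else 0 := by
      rintro ⟨i', j'⟩ _
      by_cases h : p i' = p j'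
      · simp [hpart i' j' h, h.symm]
      · have : Complex.normSq (A i' j') ≤ 1 := by
          rw [← Complex.sq_norm]
          nlinarith [hbd i' j', norm_nonneg (A i' j')]
        rw [if_neg (show ¬ p j' = p i' from fun hh => h hh.symm), sub_zero]
        exact this
    have := (Finset.sum_eq_sum_iff_of_le hptle).mp hflat (i, j)
      (Finset.mem_product.mpr ⟨Finset.mem_univ _, Finset.mem_univ _⟩)
    rw [if_neg (show ¬ p j = p i from fun hh => hij hh.symm), sub_zero] at this
    have h1 : ‖A i j‖ ^ 2 = 1 := by
      rw [Complex.sq_norm]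
      simpa using this
    nlinarith [norm_nonneg (A i j)]
  -- conclusion 4 : eigenvalues all equal, spectral theorem
  have hlameq : ∀ i, lam i = (1 - 1 / R) * N := by
    have hcs2 : (∑ i, Real.sqrt (lam i)) ^ 2
        = ((Finset.univ : Finset (Fin n)).card : ℝ) * ∑ i, Real.sqrt (lam i) ^ 2 := by
      rw [← hSsum]
      have : ∑ i, Real.sqrt (lam i) ^ 2 = T := by
        rw [← htrace]
        exact Finset.sum_congr rfl fun i _ => Real.sq_sqrt (hlam0 i)
      rw [this, hSeqNT]
      simp [hNdef]
    intro i
    have h1 := eq_of_sq_sum_eq Finset.univ (fun i => Real.sqrt (lam i)) hcs2 i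
      (Finset.mem_univ i)
    rw [← hSsum] at h1
    simp only [Finset.card_univ, Fintype.card_fin] at h1
    -- N * sqrt(lam i) = S, so lam i = S^2 / N^2
    have h2 : N ^ 2 * lam i = S ^ 2 := by
      have := congrArg (· ^ 2) h1
      simp only [mul_pow] at this
      rwa [Real.sq_sqrt (hlam0 i), ← hNdef] at this
    have h3 : S ^ 2 = N ^ 2 * ((1 - 1 / R) * N) := by rw [hS2]; ring
    have := h2.trans h3
    exact mul_left_cancel₀ (by positivity) this
  refine ⟨hdvd, hcard, hent, ?_⟩
  have hdiag : Matrix.diagonal (RCLike.ofReal ∘ lam)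
      = (((1 - 1 / r : ℝ) * n : ℝ) : ℂ) • (1 : Matrix (Fin n) (Fin n) ℂ) := by
    rw [Matrix.smul_one_eq_diagonal]
    refine congrArg Matrix.diagonal (funext fun i => ?_)
    simp only [Function.comp_apply, hlameq i]
    rw [hRdef, hNdef]
    push_cast
    ring
  calc A * Aᴴ
      = (hH.eigenvectorUnitary : Matrix (Fin n) (Fin n) ℂ)
          * Matrix.diagonal (RCLike.ofReal ∘ lam)
          * star (hH.eigenvectorUnitary : Matrix (Fin n) (Fin n) ℂ) := by
          conv_lhs => rw [hH.spectral_theorem, Unitary.conjStarAlgAut_apply]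
    _ = (((1 - 1 / r : ℝ) * n : ℝ) : ℂ)
          • ((hH.eigenvectorUnitary : Matrix (Fin n) (Fin n) ℂ)
            * star (hH.eigenvectorUnitary : Matrix (Fin n) (Fin n) ℂ)) := by
        rw [hdiag]; rw [Matrix.mul_smul, Matrix.smul_mul, mul_one]
    _ = (((1 - 1 / r : ℝ) * n : ℝ) : ℂ) • 1 := by
        rw [Matrix.mem_unitaryGroup_iff.mp hH.eigenvectorUnitary.2]
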